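/- Let p be an odd prime with p not divisible by 3. Then 2·∑_{0<x<p, x even} ∑_{0<r, r ∣ p²−x²} χ(r) equals p−3 if p ≡ 1 (mod 3), and equals p+1 if p ≡ 2 (mod 3). Here the inner sum runs over the positive divisors r of p² − x². -/

import Mathlib

/-- The Kronecker symbol `(−3/·)` on positive integers: `χ(r) = 1` if `r ≡ 1 (mod 3)`,
`χ(r) = −1` if `r ≡ 2 (mod 3)`, and `χ(r) = 0` if `3 ∣ r`. -/
def kroneckerNegThree (r : ℕ) : ℤ :=
  if r % 3 = 1 then 1 else if r % 3 = 2 then -1 else 0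

open Finset

noncomputable abbrev fchi : ArithmeticFunction ℤ :=
  ⟨kroneckerNegThree, by simp [kroneckerNegThree]⟩

lemma chi_mul (m n : ℕ) :
    kroneckerNegThree (m * n) = kroneckerNegThree m * kroneckerNegThree n := by
  unfold kroneckerNegThree
  have h := Nat.mul_mod m n 3
  have hm : m % 3 < 3 := Nat.mod_lt _ (by norm_num)
  have hn : n % 3 < 3 := Nat.mod_lt _ (by norm_num)
  interval_cases h1 : m % 3 <;> interval_cases h2 : n % 3 <;>
    simp_all <;> norm_num at h ⊢ <;> simp [h]

noncomputable def F : ArithmeticFunction ℤ := ↑ArithmeticFunction.zeta * fchi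

lemma F_apply (n : ℕ) : F n = ∑ r ∈ n.divisors, kroneckerNegThree r :=
  ArithmeticFunction.coe_zeta_mul_apply

lemma F_mult : F.IsMultiplicative :=
  ArithmeticFunction.isMultiplicative_zeta.natCast.mul
    ⟨by simp [fchi, kroneckerNegThree], fun _ => by
      simpa [fchi] using chi_mul _ _⟩

lemma F_mul_coprime {m n : ℕ} (h : Nat.Coprime m n) : F (m * n) = F m * F n :=
  F_mult.map_mul_of_coprime h

lemma F_two : F 2 = 0 := by
  rw [F_apply]
  decide

lemma F_prime {q : ℕ} (hq : q.Prime) : F q = 1 + kroneckerNegThree q := by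
  rw [F_apply, hq.divisors]
  rw [Finset.sum_insert (by simpa using fun h => hq.ne_one h.symm)]
  simp [kroneckerNegThree]

lemma card_range_mod3 (r : ℕ) (hr : 0 < r) (hr3 : r < 3) (N : ℕ) :
    ((Finset.range N).filter (fun d => d % 3 = r)).card = (N + 2 - r) / 3 := by
  induction N with
  | zero => simp; omega
  | succ n ih =>
    rw [Finset.range_add_one, Finset.filter_insert]
    by_cases h : n % 3 = r
    · rw [if_pos h, Finset.card_insert_of_notMem (by simp)]
      omega
    · rw [if_neg h]
      omega

lemma card_Ioo_mod3 (r : ℕ) (hr : 0 < r) (hr3 : r < 3) (N : ℕ) :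
    ((Finset.Ioo 0 N).filter (fun d => d % 3 = r)).card = (N + 2 - r) / 3 := by
  rw [← card_range_mod3 r hr hr3 N]
  congr 1
  ext d
  simp only [Finset.mem_filter, Finset.mem_Ioo, Finset.mem_range]
  omega

def Quad (n : ℕ) : Finset (ℕ × ℕ × ℕ × ℕ) :=
  ((Finset.range (n+1)) ×ˢ (Finset.range (n+1)) ×ˢ (Finset.range (n+1)) ×ˢ
    (Finset.range (n+1))).filter
    (fun q => 0 < q.1 ∧ 0 < q.2.1 ∧ 0 < q.2.2.1 ∧ 0 < q.2.2.2 ∧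
      q.1 * q.2.1 + q.2.2.1 * q.2.2.2 = n)

lemma mem_Quad {n : ℕ} {q : ℕ × ℕ × ℕ × ℕ} :
    q ∈ Quad n ↔ 0 < q.1 ∧ 0 < q.2.1 ∧ 0 < q.2.2.1 ∧ 0 < q.2.2.2 ∧
      q.1 * q.2.1 + q.2.2.1 * q.2.2.2 = n := by
  obtain ⟨d, α, e, β⟩ := q
  simp only [Quad, Finset.mem_filter, Finset.mem_product, Finset.mem_range]
  constructor
  · rintro ⟨-, h⟩; exact h
  · rintro ⟨h1, h2, h3, h4, he⟩
    have k1 : d ≤ d * α := Nat.le_mul_of_pos_right _ h2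
    have k2 : α ≤ d * α := Nat.le_mul_of_pos_left _ h1
    have k3 : e ≤ e * β := Nat.le_mul_of_pos_right _ h4
    have k4 : β ≤ e * β := Nat.le_mul_of_pos_left _ h3
    exact ⟨⟨by omega, by omega, by omega, by omega⟩, h1, h2, h3, h4, he⟩

lemma chi_ind (d e : ℕ) :
    kroneckerNegThree d * kroneckerNegThree e
      = (if d % 3 = e % 3 then (1:ℤ) else 0) - (if (d + e) % 3 = 0 then 1 else 0) := by
  unfold kroneckerNegThree
  have h : (d + e) % 3 = (d % 3 + e % 3) % 3 := Nat.add_mod d e 3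
  have hd : d % 3 < 3 := Nat.mod_lt _ (by norm_num)
  have he : e % 3 < 3 := Nat.mod_lt _ (by norm_num)
  interval_cases h1 : d % 3 <;> interval_cases h2 : e % 3 <;> simp_all

lemma E_eq_quad (n : ℕ) :
    ∑ a ∈ Finset.Ioo 0 n, (∑ r ∈ a.divisors, kroneckerNegThree r) *
        (∑ r ∈ (n - a).divisors, kroneckerNegThree r)
      = ∑ q ∈ Quad n, kroneckerNegThree q.1 * kroneckerNegThree q.2.2.1 := by
  have h1 : ∀ a ∈ Finset.Ioo 0 n, (∑ r ∈ a.divisors, kroneckerNegThree r) *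
      (∑ r ∈ (n - a).divisors, kroneckerNegThree r)
      = ∑ x ∈ a.divisors ×ˢ (n - a).divisors,
          kroneckerNegThree x.1 * kroneckerNegThree x.2 := by
    intro a _
    rw [Finset.sum_mul_sum, Finset.sum_product]
  rw [Finset.sum_congr rfl h1, Finset.sum_sigma']
  refine Finset.sum_nbij'
    (fun x => (x.2.1, x.1 / x.2.1, x.2.2, (n - x.1) / x.2.2))
    (fun q => ⟨q.1 * q.2.1, (q.1, q.2.2.1)⟩) ?_ ?_ ?_ ?_ ?_
  · rintro ⟨a, d, e⟩ hx
    simp only [Finset.mem_sigma, Finset.mem_Ioo, Finset.mem_product,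
      Nat.mem_divisors] at hx
    obtain ⟨⟨ha0, han⟩, ⟨hda, ha0'⟩, ⟨hde, hne⟩⟩ := hx
    simp only [mem_Quad]
    have hd0 : 0 < d := Nat.pos_of_dvd_of_pos hda ha0
    have he0 : 0 < e := Nat.pos_of_dvd_of_pos hde (by omega)
    have h2 : d * (a / d) = a := Nat.mul_div_cancel' hda
    have h3 : e * ((n - a) / e) = n - a := Nat.mul_div_cancel' hde
    refine ⟨hd0, Nat.div_pos (Nat.le_of_dvd ha0 hda) hd0,
      he0, Nat.div_pos (Nat.le_of_dvd (by omega) hde) he0, by omega⟩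
  · rintro ⟨d, α, e, β⟩ hq
    simp only [mem_Quad] at hq
    obtain ⟨h1, h2, h3, h4, he⟩ := hq
    simp only [Finset.mem_sigma, Finset.mem_Ioo, Finset.mem_product,
      Nat.mem_divisors]
    have k3 : e ≤ e * β := Nat.le_mul_of_pos_right _ h4
    have hdα : 0 < d * α := Nat.mul_pos h1 h2
    have heβ : 0 < e * β := Nat.mul_pos h3 h4
    refine ⟨⟨hdα, by omega⟩, ⟨Dvd.intro _ rfl, by omega⟩, ⟨⟨β, by omega⟩, by omega⟩⟩
  · rintro ⟨a, d, e⟩ hx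
    simp only [Finset.mem_sigma, Finset.mem_Ioo, Finset.mem_product,
      Nat.mem_divisors] at hx
    obtain ⟨⟨ha0, han⟩, ⟨hda, ha0'⟩, ⟨hde, hne⟩⟩ := hx
    dsimp only
    simp [Nat.mul_div_cancel' hda]
  · rintro ⟨d, α, e, β⟩ hq
    simp only [mem_Quad] at hq
    obtain ⟨h1, h2, h3, h4, he⟩ := hq
    have hne : n - d * α = e * β := by omega
    simp only [Prod.mk.injEq]
    rw [hne]
    exact ⟨trivial, Nat.mul_div_cancel_left _ h1, trivial, Nat.mul_div_cancel_left _ h3⟩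
  · rintro ⟨a, d, e⟩ _
    rfl

lemma quad_sum_card (n : ℕ) :
    ∑ q ∈ Quad n, kroneckerNegThree q.1 * kroneckerNegThree q.2.2.1
      = (((Quad n).filter (fun q => q.1 % 3 = q.2.2.1 % 3)).card : ℤ)
        - (((Quad n).filter (fun q => (q.1 + q.2.2.1) % 3 = 0)).card : ℤ) := by
  rw [Finset.sum_congr rfl (fun q _ => chi_ind q.1 q.2.2.1), Finset.sum_sub_distrib,
    Finset.sum_boole, Finset.sum_boole]

lemma card_B_eq (n : ℕ) (h3 : ¬ 3 ∣ n) :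
    ((Quad n).filter (fun q => (q.1 + q.2.2.1) % 3 = 0)).card
      = ((Quad n).filter
          (fun q => q.1 % 3 = q.2.2.1 % 3 ∧ q.2.1 ≠ q.2.2.2)).card := by
  apply Finset.card_nbij'
    (fun q => if q.2.2.1 < q.1 then (q.1 - q.2.2.1, q.2.1, q.2.2.1, q.2.2.2 + q.2.1)
              else (q.1, q.2.1 + q.2.2.2, q.2.2.1 - q.1, q.2.2.2))
    (fun q => if q.2.1 < q.2.2.2 then (q.1 + q.2.2.1, q.2.1, q.2.2.1, q.2.2.2 - q.2.1)
              else (q.1, q.2.1 - q.2.2.2, q.1 + q.2.2.1, q.2.2.2))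
  · -- forward maps into target
    rintro ⟨d, α, e, β⟩ hq
    simp only [Finset.mem_coe, Finset.mem_filter, mem_Quad] at hq
    obtain ⟨⟨h1, h2, h3', h4, he⟩, hmod⟩ := hq
    have hnd : ¬ (3 ∣ d ∧ 3 ∣ e) := by
      rintro ⟨hd, he'⟩
      exact h3 (he ▸ dvd_add (hd.mul_right α) (he'.mul_right β))
    have hdne : d % 3 ≠ e % 3 ∧ d % 3 ≠ 0 ∧ e % 3 ≠ 0 := by omega
    have hde : d ≠ e := by omega
    by_cases hlt : e < d
    · dsimp only; rw [if_pos hlt]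
      simp only [Finset.mem_coe, Finset.mem_filter, mem_Quad]
      have heq : (d - e) * α + e * (β + α) = n := by
        have : (d - e) * α = d * α - e * α := Nat.sub_mul d e α
        have h5 : e * (β + α) = e * β + e * α := Nat.mul_add e β α
        have h6 : e * α ≤ d * α := Nat.mul_le_mul_right α (by omega)
        omega
      exact ⟨⟨by omega, h2, h3', by omega, heq⟩, by omega, by omega⟩
    · dsimp only; rw [if_neg hlt]
      simp only [Finset.mem_coe, Finset.mem_filter, mem_Quad]
      have heq : d * (α + β) + (e - d) * β = n := by
        have : (e - d) * β = e * β - d * β := Nat.sub_mul e d β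
        have h5 : d * (α + β) = d * α + d * β := Nat.mul_add d α β
        have h6 : d * β ≤ e * β := Nat.mul_le_mul_right β (by omega)
        omega
      exact ⟨⟨h1, by omega, by omega, h4, heq⟩, by omega, by omega⟩
  · -- backward maps into source
    rintro ⟨d, α, e, β⟩ hq
    simp only [Finset.mem_coe, Finset.mem_filter, mem_Quad] at hq
    obtain ⟨⟨h1, h2, h3', h4, he⟩, hmod, hab⟩ := hq
    have hnd : ¬ (3 ∣ d ∧ 3 ∣ e) := by
      rintro ⟨hd, he'⟩
      exact h3 (he ▸ dvd_add (hd.mul_right α) (he'.mul_right β))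
    by_cases hlt : α < β
    · dsimp only; rw [if_pos hlt]
      simp only [Finset.mem_coe, Finset.mem_filter, mem_Quad]
      have heq : (d + e) * α + e * (β - α) = n := by
        have : e * (β - α) = e * β - e * α := Nat.mul_sub e β α
        have h5 : (d + e) * α = d * α + e * α := Nat.add_mul d e α
        have h6 : e * α ≤ e * β := Nat.mul_le_mul_left e (by omega)
        omega
      exact ⟨⟨by omega, h2, h3', by omega, heq⟩, by omega⟩
    · dsimp only; rw [if_neg hlt]
      simp only [Finset.mem_coe, Finset.mem_filter, mem_Quad]
      have heq : d * (α - β) + (d + e) * β = n := by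
        have : d * (α - β) = d * α - d * β := Nat.mul_sub d α β
        have h5 : (d + e) * β = d * β + e * β := Nat.add_mul d e β
        have h6 : d * β ≤ d * α := Nat.mul_le_mul_left d (by omega)
        omega
      exact ⟨⟨h1, by omega, by omega, h4, heq⟩, by omega⟩
  · -- left inverse
    rintro ⟨d, α, e, β⟩ hq
    simp only [Finset.mem_coe, Finset.mem_filter, mem_Quad] at hq
    obtain ⟨⟨h1, h2, h3', h4, he⟩, hmod⟩ := hq
    have hnd : ¬ (3 ∣ d ∧ 3 ∣ e) := by
      rintro ⟨hd, he'⟩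
      exact h3 (he ▸ dvd_add (hd.mul_right α) (he'.mul_right β))
    have hde : d ≠ e := by omega
    by_cases hlt : e < d
    · have h7 : α < β + α := by omega
      simp only [hlt, h7, if_true, Prod.mk.injEq]
      refine ⟨by omega, by trivial, by trivial, by omega⟩
    · have h7 : ¬ α + β < β := by omega
      simp only [hlt, h7, if_false, Prod.mk.injEq]
      refine ⟨by trivial, by omega, by omega, by trivial⟩
  · -- right inverse
    rintro ⟨d, α, e, β⟩ hq
    simp only [Finset.mem_coe, Finset.mem_filter, mem_Quad] at hq
    obtain ⟨⟨h1, h2, h3', h4, he⟩, hmod, hab⟩ := hq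
    by_cases hlt : α < β
    · have h7 : e < d + e := by omega
      simp only [hlt, h7, if_true, Prod.mk.injEq]
      refine ⟨by omega, by trivial, by trivial, by omega⟩
    · have h7 : ¬ d + e < d := by omega
      simp only [hlt, h7, if_false, Prod.mk.injEq]
      refine ⟨by trivial, by omega, by omega, by trivial⟩


lemma card_fiber (n m α₀ : ℕ) (hm : m * α₀ = n) (hα : 0 < α₀) (h3 : ¬ 3 ∣ n) :
    ((Quad n).filter
        (fun q => (q.1 % 3 = q.2.2.1 % 3 ∧ q.2.1 = q.2.2.2) ∧ q.2.1 = α₀)).card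
      = ((Finset.Ioo 0 m).filter (fun d => d % 3 = 2 * m % 3)).card := by
  apply Finset.card_nbij' (fun q => q.1) (fun d => (d, α₀, m - d, α₀))
  · rintro ⟨d, α, e, β⟩ hq
    simp only [Finset.mem_coe, Finset.mem_filter, mem_Quad] at hq
    obtain ⟨⟨h1, h2, h3', h4, he⟩, ⟨hmod, hab⟩, hαv⟩ := hq
    have hβ : β = α₀ := by omega
    rw [hαv, hβ] at he
    have hde : (d + e) * α₀ = m * α₀ := by rw [Nat.add_mul]; omega
    have hdem : d + e = m := Nat.eq_of_mul_eq_mul_right hα hde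
    simp only [Finset.mem_coe, Finset.mem_filter, Finset.mem_Ioo]
    omega
  · rintro d hd
    simp only [Finset.mem_coe, Finset.mem_filter, Finset.mem_Ioo] at hd
    obtain ⟨⟨hd0, hdm⟩, hdr⟩ := hd
    simp only [Finset.mem_coe, Finset.mem_filter, mem_Quad]
    have heq : d * α₀ + (m - d) * α₀ = n := by
      rw [← Nat.add_mul]
      have h5 : d + (m - d) = m := by omega
      rw [h5, hm]
    exact ⟨⟨by omega, hα, by omega, hα, heq⟩, ⟨by omega, by trivial⟩, by trivial⟩
  · rintro ⟨d, α, e, β⟩ hq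
    simp only [Finset.mem_coe, Finset.mem_filter, mem_Quad] at hq
    obtain ⟨⟨h1, h2, h3', h4, he⟩, ⟨hmod, hab⟩, hαv⟩ := hq
    have hβ : β = α₀ := by omega
    rw [hαv, hβ] at he
    have hde : (d + e) * α₀ = m * α₀ := by rw [Nat.add_mul]; omega
    have hdem : d + e = m := Nat.eq_of_mul_eq_mul_right hα hde
    simp only [Prod.mk.injEq]
    refine ⟨by trivial, by omega, by omega, by omega⟩
  · rintro d hd
    rfl

lemma divisors_two_mul_prime {p : ℕ} (hp : p.Prime) {α : ℕ}
    (hdvd : α ∣ 2 * p) : α = 1 ∨ α = 2 ∨ α = p ∨ α = 2 * p := by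
  by_cases hpα : p ∣ α
  · obtain ⟨k, rfl⟩ := hpα
    have hk : k ∣ 2 := by
      have h := hdvd
      rw [mul_comm 2 p] at h
      exact (mul_dvd_mul_iff_left hp.pos.ne').mp h
    rcases (Nat.prime_two.eq_one_or_self_of_dvd k hk) with rfl | rfl
    · right; right; left; omega
    · right; right; right; omega
  · have hco : Nat.Coprime α p := (Nat.coprime_comm.mp (hp.coprime_iff_not_dvd.mpr hpα))
    have h2 : α ∣ 2 := hco.dvd_of_dvd_mul_right hdvd
    rcases (Nat.prime_two.eq_one_or_self_of_dvd α h2) with rfl | rfl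
    · left; rfl
    · right; left; rfl

lemma card_diag (p : ℕ) (hp : p.Prime) (hodd : Odd p) (h3 : ¬ 3 ∣ p) :
    ((Quad (2*p)).filter (fun q => q.1 % 3 = q.2.2.1 % 3 ∧ q.2.1 = q.2.2.2)).card
      = p + 1 := by
  have hp2 := hp.two_le
  have hodd' : p % 2 = 1 := Nat.odd_iff.mp hodd
  have hp3 : p % 3 = 1 ∨ p % 3 = 2 := by omega
  have hp5 : 5 ≤ p := by
    rcases Nat.lt_or_ge p 5 with h | h
    · interval_cases p <;> omega
    · exact h
  have h3n : ¬ 3 ∣ 2 * p := by omega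
  rw [Finset.card_eq_sum_card_fiberwise
    (f := fun q => q.2.1) (t := insert 1 (insert 2 (insert p {2*p}))) ?hmap]
  case hmap =>
    rintro ⟨d, α, e, β⟩ hq
    simp only [Finset.mem_coe, Finset.mem_filter, mem_Quad] at hq
    obtain ⟨⟨h1, h2, h3', h4, he⟩, hmod, hab⟩ := hq
    have hβ : β = α := hab.symm
    rw [hβ] at he
    have hdvd : α ∣ 2 * p := ⟨d + e, by rw [mul_comm α (d+e), Nat.add_mul]; omega⟩
    have := divisors_two_mul_prime hp hdvd
    simp only [Finset.mem_coe, Finset.mem_insert, Finset.mem_singleton]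
    tauto
  rw [Finset.sum_insert (by simp; omega), Finset.sum_insert (by simp; omega),
    Finset.sum_insert (by simp; omega), Finset.sum_singleton]
  simp only [Finset.filter_filter]
  rw [card_fiber (2*p) (2*p) 1 (by omega) (by omega) h3n,
    card_fiber (2*p) p 2 (by omega) (by omega) h3n,
    card_fiber (2*p) 2 p (by omega) (by omega) h3n,
    card_fiber (2*p) 1 (2*p) (by omega) (by omega) h3n]
  rw [card_Ioo_mod3 (2*(2*p)%3) (by omega) (by omega) (2*p),
    card_Ioo_mod3 (2*p%3) (by omega) (by omega) p,
    card_Ioo_mod3 (2*2%3) (by omega) (by omega) 2,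
    card_Ioo_mod3 (2*1%3) (by omega) (by omega) 1]
  omega

lemma E_val (p : ℕ) (hp : p.Prime) (hodd : Odd p) (h3 : ¬ 3 ∣ p) :
    ∑ a ∈ Finset.Ioo 0 (2*p), (∑ r ∈ a.divisors, kroneckerNegThree r) *
        (∑ r ∈ ((2*p) - a).divisors, kroneckerNegThree r) = (p : ℤ) + 1 := by
  have h3n : ¬ 3 ∣ 2 * p := by omega
  rw [E_eq_quad, quad_sum_card, card_B_eq _ h3n]
  have hsplit := Finset.card_filter_add_card_filter_not
    (s := (Quad (2*p)).filter (fun q => q.1 % 3 = q.2.2.1 % 3))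
    (p := fun q => q.2.1 = q.2.2.2)
  rw [Finset.filter_filter, Finset.filter_filter] at hsplit
  have hdiag := card_diag p hp hodd h3
  simp only [ne_eq] at hsplit hdiag ⊢
  omega

/-- Let `p` be an odd prime not divisible by `3`.  Then
`2·∑_{0<x<p, x even} ∑_{0<r ∣ p²−x²} χ(r)` equals `p−3` if `p ≡ 1 (mod 3)` and
`p+1` if `p ≡ 2 (mod 3)`. -/
theorem sum_kronecker_even (p : ℕ) (hp : p.Prime) (hodd : Odd p) (h3 : ¬ 3 ∣ p) :
    (p % 3 = 1 →
      2 * ∑ x ∈ (Finset.Ioo 0 p).filter (fun x => Even x),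
        ∑ r ∈ (p ^ 2 - x ^ 2).divisors, kroneckerNegThree r = (p : ℤ) - 3) ∧
    (p % 3 = 2 →
      2 * ∑ x ∈ (Finset.Ioo 0 p).filter (fun x => Even x),
        ∑ r ∈ (p ^ 2 - x ^ 2).divisors, kroneckerNegThree r = (p : ℤ) + 1) := by
  have hp2 := hp.two_le
  have hodd' : p % 2 = 1 := Nat.odd_iff.mp hodd
  -- Step 1: rewrite the sum over even x as a sum over odd a = p - x
  have hS : ∑ x ∈ (Finset.Ioo 0 p).filter (fun x => Even x),
      ∑ r ∈ (p ^ 2 - x ^ 2).divisors, kroneckerNegThree r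
      = ∑ a ∈ (Finset.Ioo 0 p).filter (fun a => ¬ Even a), F a * F (2*p - a) := by
    apply Finset.sum_nbij' (fun x => p - x) (fun a => p - a)
    · intro x hx
      simp only [Finset.mem_filter, Finset.mem_Ioo, Nat.even_iff] at *
      omega
    · intro a ha
      simp only [Finset.mem_filter, Finset.mem_Ioo, Nat.even_iff] at *
      omega
    · intro x hx
      simp only [Finset.mem_filter, Finset.mem_Ioo] at hx
      omega
    · intro a ha
      simp only [Finset.mem_filter, Finset.mem_Ioo] at ha
      omega
    · intro x hx
      simp only [Finset.mem_filter, Finset.mem_Ioo, Nat.even_iff] at hx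
      obtain ⟨⟨hx0, hxp⟩, hxe⟩ := hx
      have h1 : p ^ 2 - x ^ 2 = (p + x) * (p - x) := Nat.sq_sub_sq p x
      have h2 : 2*p - (p - x) = p + x := by omega
      have hco : Nat.Coprime (p - x) (p + x) := by
        have hg1 : Nat.gcd (p-x) (p+x) ∣ p - x := Nat.gcd_dvd_left _ _
        have hg2 : Nat.gcd (p-x) (p+x) ∣ p + x := Nat.gcd_dvd_right _ _
        have hg2p : Nat.gcd (p-x) (p+x) ∣ 2 * p := by
          have hd := dvd_add hg1 hg2
          have hsum : (p - x) + (p + x) = 2 * p := by omega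
          rwa [hsum] at hd
        have h2g : ¬ 2 ∣ Nat.gcd (p-x) (p+x) := by
          intro h2d
          have := h2d.trans hg1
          omega
        have hgco2 : Nat.Coprime (Nat.gcd (p-x) (p+x)) 2 :=
          Nat.coprime_comm.mp ((Nat.prime_two.coprime_iff_not_dvd).mpr h2g)
        have hgp : Nat.gcd (p-x) (p+x) ∣ p := hgco2.dvd_of_dvd_mul_left hg2p
        rcases hp.eq_one_or_self_of_dvd _ hgp with h | h
        · exact h
        · exfalso
          have := Nat.le_of_dvd (by omega) hg1
          omega
      have hFa : (∑ r ∈ (p ^ 2 - x ^ 2).divisors, kroneckerNegThree r)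
          = F (p ^ 2 - x ^ 2) := (F_apply _).symm
      rw [hFa, h1, mul_comm (p+x) (p-x), F_mul_coprime hco, h2]
  -- Step 2: the full sum over Ioo 0 (2p) equals 2 * (odd part below p) + F p ^ 2
  have hpmem : p ∈ (Finset.Ioo 0 (2*p)).filter (fun a => ¬ Even a) := by
    simp only [Finset.mem_filter, Finset.mem_Ioo, Nat.even_iff]
    omega
  have hT : ∑ a ∈ Finset.Ioo 0 (2*p), F a * F (2*p - a)
      = 2 * (∑ a ∈ (Finset.Ioo 0 p).filter (fun a => ¬ Even a), F a * F (2*p - a))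
        + F p * F p := by
    rw [← Finset.sum_filter_add_sum_filter_not (Finset.Ioo 0 (2*p)) (fun a => Even a)]
    have heven : ∑ a ∈ (Finset.Ioo 0 (2*p)).filter (fun a => Even a),
        F a * F (2*p - a) = 0 := by
      apply Finset.sum_eq_zero
      intro a ha
      simp only [Finset.mem_filter, Finset.mem_Ioo, Nat.even_iff] at ha
      obtain ⟨⟨ha0, ha2p⟩, hae⟩ := ha
      by_cases hm : a / 2 % 2 = 1
      · have h1 : a = 2 * (a / 2) := by omega
        have hco2 : Nat.Coprime 2 (a / 2) :=
          (Nat.prime_two.coprime_iff_not_dvd).mpr (by omega)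
        rw [h1, F_mul_coprime hco2, F_two, zero_mul, zero_mul]
      · have h1 : 2*p - a = 2 * (p - a / 2) := by omega
        have hco2 : Nat.Coprime 2 (p - a / 2) :=
          (Nat.prime_two.coprime_iff_not_dvd).mpr (by omega)
        rw [h1, F_mul_coprime hco2, F_two, zero_mul, mul_zero]
    rw [heven, zero_add]
    rw [← Finset.add_sum_erase _ _ hpmem]
    have hn2p : 2*p - p = p := by omega
    rw [← Finset.sum_filter_add_sum_filter_not
      (((Finset.Ioo 0 (2*p)).filter (fun a => ¬ Even a)).erase p) (fun a => a < p)]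
    have hset1 : (((Finset.Ioo 0 (2*p)).filter (fun a => ¬ Even a)).erase p).filter
        (fun a => a < p) = (Finset.Ioo 0 p).filter (fun a => ¬ Even a) := by
      ext a
      simp only [Finset.mem_filter, Finset.mem_erase, Finset.mem_Ioo, Nat.even_iff]
      omega
    have hset2 : ∑ a ∈ (((Finset.Ioo 0 (2*p)).filter (fun a => ¬ Even a)).erase p).filter
        (fun a => ¬ a < p), F a * F (2*p - a)
        = ∑ a ∈ (Finset.Ioo 0 p).filter (fun a => ¬ Even a), F a * F (2*p - a) := by
      apply Finset.sum_nbij' (fun a => 2*p - a) (fun a => 2*p - a)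
      · intro a ha
        simp only [Finset.mem_filter, Finset.mem_erase, Finset.mem_Ioo,
          Nat.even_iff] at *
        omega
      · intro a ha
        simp only [Finset.mem_filter, Finset.mem_erase, Finset.mem_Ioo,
          Nat.even_iff] at *
        omega
      · intro a ha
        simp only [Finset.mem_filter, Finset.mem_erase, Finset.mem_Ioo] at ha
        omega
      · intro a ha
        simp only [Finset.mem_filter, Finset.mem_Ioo] at ha
        omega
      · intro a ha
        simp only [Finset.mem_filter, Finset.mem_erase, Finset.mem_Ioo] at ha
        have h4 : 2*p - (2*p - a) = a := by omega
        rw [h4, mul_comm]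
    rw [hset1, hset2, hn2p]
    ring
  have hE := E_val p hp hodd h3
  have hEF : ∑ a ∈ Finset.Ioo 0 (2*p), F a * F (2*p - a) = (p : ℤ) + 1 := by
    rw [← hE]
    apply Finset.sum_congr rfl
    intro a ha
    rw [F_apply, F_apply]
  have hFp : F p = 1 + kroneckerNegThree p := F_prime hp
  constructor
  · intro hmod
    have hchi : kroneckerNegThree p = 1 := by
      unfold kroneckerNegThree
      rw [if_pos hmod]
    rw [hS]
    rw [hT] at hEF
    rw [hFp, hchi] at hEF
    linarith [hEF]
  · intro hmod
    have hchi : kroneckerNegThree p = -1 := by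
      unfold kroneckerNegThree
      rw [if_neg (by omega), if_pos hmod]
    rw [hS]
    rw [hT] at hEF
    rw [hFp, hchi] at hEF
    linarith [hEF]
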